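/- Let n ≥ 1, let K, L ⊂ ℝⁿ be convex bodies containing the origin in their interiors, let φ : [0,∞) → [0,∞) be an increasing, non-constant, convex function, and let μ be the measure on ℝⁿ with density x ↦ exp(−φ(‖x‖_L)) with respect to Lebesgue measure. If there exists t₀ > 0 such that μ(tL; B₂ⁿ) ≥ μ(tK; B₂ⁿ) for all t ≥ t₀ (i.e. the weighted outer Minkowski content of tL dominates that of tK for all sufficiently large t), then L ⊆ K. Here B₂ⁿ is the closed Euclidean unit ball. -/

import Mathlib

open MeasureTheory Filter Set Pointwise

section gaugehelp
variable {E : Type*} [NormedAddCommGroup E] [NormedSpace ℝ E]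

lemma mem_smul_iff_gauge_le {s : Set E} (hcl : IsClosed s) (hconv : Convex ℝ s)
    (h0 : s ∈ nhds 0) {t : ℝ} (ht : 0 < t) {x : E} : x ∈ t • s ↔ gauge s x ≤ t := by
  constructor
  · rintro ⟨y, hy, rfl⟩
    rw [gauge_smul_of_nonneg ht.le, smul_eq_mul]
    calc t * gauge s y ≤ t * 1 := by
          exact mul_le_mul_of_nonneg_left (gauge_le_one_of_mem hy) ht.le
      _ = t := mul_one t
  · intro h
    have h1 : gauge s (t⁻¹ • x) ≤ 1 := by
      rw [gauge_smul_of_nonneg (inv_nonneg.2 ht.le), smul_eq_mul]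
      rw [inv_mul_le_iff₀ ht, mul_one]
      exact h
    have : t⁻¹ • x ∈ s := by
      rw [gauge_le_one_iff_mem_closure hconv h0, hcl.closure_eq] at h1
      exact h1
    exact ⟨t⁻¹ • x, this, by simp [smul_smul, mul_inv_cancel₀ ht.ne']⟩

lemma gauge_le_norm_div {s : Set E} {ρ : ℝ} (hρ : 0 < ρ)
    (hball : Metric.closedBall (0:E) ρ ⊆ s) (x : E) : gauge s x ≤ ‖x‖ / ρ := by
  have := gauge_mono (absorbent_ball_zero hρ) (Metric.ball_subset_closedBall.trans hball) x
  rwa [gauge_ball hρ.le] at this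

lemma gauge_lip {s : Set E} (hconv : Convex ℝ s) (h0 : s ∈ nhds 0) {ρ : ℝ} (hρ : 0 < ρ)
    (hball : Metric.closedBall (0:E) ρ ⊆ s) (x y : E) :
    gauge s x ≤ gauge s y + ‖x - y‖ / ρ := by
  have habs : Absorbent ℝ s := absorbent_nhds_zero h0
  calc gauge s x = gauge s (y + (x - y)) := by rw [add_sub_cancel]
    _ ≤ gauge s y + gauge s (x - y) := gauge_add_le hconv habs _ _
    _ ≤ gauge s y + ‖x - y‖ / ρ := add_le_add_right (gauge_le_norm_div hρ hball _) _

lemma not_mem_smul_gauge {s : Set E} (hconv : Convex ℝ s) (h00 : (0:E) ∈ s)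
    (h0 : s ∈ nhds 0) {t : ℝ} {x : E} (hx : x ∉ t • s) : t ≤ gauge s x :=
  le_gauge_of_notMem (hconv.starConvex h00) ((absorbent_nhds_zero h0).absorbs) hx

end gaugehelp
open MeasureTheory Filter Set Pointwise

lemma pow_shell_le {n : ℕ} (hn : 1 ≤ n) {t a : ℝ} (ht : 0 < t) (ha : 0 ≤ a) :
    (t + a) ^ n - t ^ n ≤ a * n * (t + a) ^ (n - 1) := by
  have hta : 0 < t + a := by linarith
  have h1 : n - 1 + 1 = n := by omega
  have hpow : (t + a) ^ n = (t + a) ^ (n - 1) * (t + a) := by rw [← pow_succ, h1]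
  have hxle : a / (t + a) ≤ 1 := by
    rw [div_le_one hta]; linarith
  have hx0 : 0 ≤ a / (t + a) := by positivity
  have hb := one_add_mul_le_pow (a := -(a / (t + a))) (by linarith) n
  have h2 : (1 + -(a / (t + a))) = t / (t + a) := by field_simp; ring
  rw [h2] at hb
  have h3 : (1 + (n : ℝ) * -(a / (t + a))) * (t + a) ^ n ≤ (t / (t + a)) ^ n * (t + a) ^ n :=
    mul_le_mul_of_nonneg_right hb (by positivity)
  have h4 : (t / (t + a)) ^ n * (t + a) ^ n = t ^ n := by
    rw [div_pow, div_mul_cancel₀]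
    positivity
  have h5 : a / (t + a) * (t + a) ^ n = a * (t + a) ^ (n - 1) := by
    rw [hpow]; field_simp
  rw [h4] at h3
  nlinarith [h3, h5]

lemma shell_upper {n : ℕ} (μ : Measure (EuclideanSpace ℝ (Fin n)))
    (dens : EuclideanSpace ℝ (Fin n) → ENNReal) (hμd : μ = volume.withDensity dens)
    {M : Set (EuclideanSpace ℝ (Fin n))} (hMcomp : IsCompact M) (hMconv : Convex ℝ M)
    (hM0 : M ∈ nhds 0)
    {ρ : ℝ} (hρ : 0 < ρ) (hball : Metric.closedBall 0 ρ ⊆ M)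
    {t ε : ℝ} (ht : 0 < t) (hε : 0 < ε) {d : ENNReal} (hd : d ≠ ⊤)
    (hdbound : ∀ x, x ∉ t • M → dens x ≤ d) :
    (μ (t • M + ε • Metric.closedBall 0 1)).toReal - (μ (t • M)).toReal
      ≤ d.toReal * (((t + ε / ρ) ^ n - t ^ n) * (volume M).toReal) := by
  have hMcl : IsClosed M := hMcomp.isClosed
  have habs : Absorbent ℝ M := absorbent_nhds_zero hM0
  set a := ε / ρ with ha_def
  have ha : 0 < a := by positivity
  have hta : 0 < t + a := by linarith
  -- RHS is nonneg
  have hMvol : volume M ≠ ⊤ := hMcomp.measure_lt_top.ne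
  have hpowmono : t ^ n ≤ (t + a) ^ n := pow_le_pow_left₀ ht.le (by linarith) n
  have hRHS : 0 ≤ d.toReal * (((t + a) ^ n - t ^ n) * (volume M).toReal) := by
    apply mul_nonneg ENNReal.toReal_nonneg
    apply mul_nonneg (by linarith) ENNReal.toReal_nonneg
  -- subset into the big dilate
  have hsub : t • M + ε • Metric.closedBall 0 1 ⊆ (t + a) • M := by
    rintro x ⟨y, hy, z, hz, rfl⟩
    apply (mem_smul_iff_gauge_le hMcl hMconv hM0 hta).2
    have hgy : gauge M y ≤ t := (mem_smul_iff_gauge_le hMcl hMconv hM0 ht).1 hy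
    have hz' : ‖z‖ ≤ ε := by
      obtain ⟨w, hw, rfl⟩ := hz
      rw [norm_smul, Real.norm_of_nonneg hε.le]
      have : ‖w‖ ≤ 1 := by simpa [Metric.mem_closedBall] using hw
      nlinarith
    calc gauge M (y + z) ≤ gauge M y + gauge M z := gauge_add_le hMconv habs _ _
      _ ≤ t + ‖z‖ / ρ := add_le_add hgy (gauge_le_norm_div hρ hball z)
      _ ≤ t + a := by rw [ha_def]; gcongr
  -- measurability and compactness
  have hcomp_t : IsCompact (t • M) := hMcomp.smul t
  have hcomp_ta : IsCompact ((t + a) • M) := hMcomp.smul (t + a)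
  have hmeas_t : MeasurableSet (t • M) := hcomp_t.isClosed.measurableSet
  have hmeas_ta : MeasurableSet ((t + a) • M) := hcomp_ta.isClosed.measurableSet
  have hinc : t • M ⊆ (t + a) • M := by
    intro x hx
    apply (mem_smul_iff_gauge_le hMcl hMconv hM0 hta).2
    exact le_trans ((mem_smul_iff_gauge_le hMcl hMconv hM0 ht).1 hx) (by linarith)
  set shell := (t + a) • M \ t • M with hshell_def
  have hmeas_shell : MeasurableSet shell := hmeas_ta.diff hmeas_t
  -- measure of shell
  have hμshell : μ shell ≤ d * volume shell := by
    rw [hμd, withDensity_apply _ hmeas_shell]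
    calc ∫⁻ x in shell, dens x ∂volume ≤ ∫⁻ _ in shell, d ∂volume :=
          setLIntegral_mono measurable_const (fun x hx => hdbound x hx.2)
      _ = d * volume shell := setLIntegral_const _ _
  have hvol_ta : volume ((t + a) • M) = ENNReal.ofReal ((t + a) ^ n) * volume M := by
    rw [Measure.addHaar_smul_of_nonneg _ hta.le, finrank_euclideanSpace_fin]
  have hvol_t : volume (t • M) = ENNReal.ofReal (t ^ n) * volume M := by
    rw [Measure.addHaar_smul_of_nonneg _ ht.le, finrank_euclideanSpace_fin]
  have hvol_shell : (volume shell).toReal ≤ ((t + a) ^ n - t ^ n) * (volume M).toReal := by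
    rw [hshell_def, measure_diff hinc hmeas_t.nullMeasurableSet
      (by rw [hvol_t]; exact ENNReal.mul_ne_top ENNReal.ofReal_ne_top hMvol)]
    rw [ENNReal.toReal_sub_of_le (by rw [hvol_t, hvol_ta]; exact mul_le_mul_left (ENNReal.ofReal_le_ofReal hpowmono) _)
      (by rw [hvol_ta]; exact ENNReal.mul_ne_top ENNReal.ofReal_ne_top hMvol)]
    rw [hvol_t, hvol_ta, ENNReal.toReal_mul, ENNReal.toReal_mul,
      ENNReal.toReal_ofReal (by positivity), ENNReal.toReal_ofReal (by positivity)]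
    apply le_of_eq
    ring
  -- finiteness
  have hμ_le_shell : μ shell ≠ ⊤ := by
    refine ne_top_of_le_ne_top ?_ hμshell
    exact ENNReal.mul_ne_top hd ((measure_mono (diff_subset)).trans_lt
      (by rw [hvol_ta]; exact ENNReal.mul_lt_top ENNReal.ofReal_lt_top hMvol.lt_top)).ne
  have hμsum : μ (t • M + ε • Metric.closedBall 0 1) ≤ μ shell + μ (t • M) := by
    calc μ (t • M + ε • Metric.closedBall 0 1) ≤ μ ((t + a) • M) := measure_mono hsub
      _ = μ (shell ∪ t • M) := by rw [hshell_def, diff_union_of_subset hinc]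
      _ ≤ μ shell + μ (t • M) := measure_union_le _ _
  by_cases hfin : μ (t • M + ε • Metric.closedBall 0 1) = ⊤
  · rw [hfin]
    simp only [ENNReal.toReal_top, zero_sub]
    refine le_trans (by simp [ENNReal.toReal_nonneg]) hRHS
  have hμt_fin : μ (t • M) ≠ ⊤ := by
    refine ne_top_of_le_ne_top hfin (measure_mono ?_)
    exact subset_add_left _ ⟨0, Metric.mem_closedBall_self zero_le_one, smul_zero ε⟩
  have h1 : (μ (t • M + ε • Metric.closedBall 0 1)).toReal ≤ (μ shell).toReal + (μ (t • M)).toReal := by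
    rw [← ENNReal.toReal_add hμ_le_shell hμt_fin]
    exact ENNReal.toReal_mono (by exact ENNReal.add_ne_top.2 ⟨hμ_le_shell, hμt_fin⟩) hμsum
  have h2 : (μ shell).toReal ≤ d.toReal * (volume shell).toReal := by
    rw [← ENNReal.toReal_mul]
    refine ENNReal.toReal_mono ?_ hμshell
    exact ENNReal.mul_ne_top hd ((measure_mono diff_subset).trans_lt
      (by rw [hvol_ta]; exact ENNReal.mul_lt_top ENNReal.ofReal_lt_top hMvol.lt_top)).ne
  have h3 : d.toReal * (volume shell).toReal ≤ d.toReal * (((t + a) ^ n - t ^ n) * (volume M).toReal) :=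
    mul_le_mul_of_nonneg_left hvol_shell ENNReal.toReal_nonneg
  linarith
open MeasureTheory Filter Set Pointwise

/-- Radial cone sector of aperture `η` around direction `p`, truncated at gauge value `s`. -/
def coneSet {E : Type*} [NormedAddCommGroup E] [NormedSpace ℝ E]
    (K : Set E) (p : E) (η s : ℝ) : Set E :=
  {x | gauge K x ≤ s ∧ ‖x - gauge K x • p‖ ≤ η * gauge K x}

section coneSet
variable {E : Type*} [NormedAddCommGroup E] [NormedSpace ℝ E]
  {K : Set E} {p : E} {η : ℝ}

lemma coneSet_mono {s s' : ℝ} (h : s ≤ s') : coneSet K p η s ⊆ coneSet K p η s' :=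
  fun _ hx => ⟨hx.1.trans h, hx.2⟩

lemma coneSet_smul {s : ℝ} (hs : 0 < s) : coneSet K p η s = s • coneSet K p η 1 := by
  ext x
  rw [mem_smul_set_iff_inv_smul_mem₀ hs.ne']
  have hg : gauge K (s⁻¹ • x) = s⁻¹ * gauge K x := by
    rw [gauge_smul_of_nonneg (inv_nonneg.2 hs.le), smul_eq_mul]
  simp only [coneSet, mem_setOf_eq, hg]
  have hnorm : ‖s⁻¹ • x - (s⁻¹ * gauge K x) • p‖ = s⁻¹ * ‖x - gauge K x • p‖ := by
    rw [mul_smul, ← smul_sub, norm_smul, Real.norm_of_nonneg (inv_nonneg.2 hs.le)]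
  rw [hnorm]
  have key : ∀ g A : ℝ, 0 ≤ g → 0 ≤ A → (g ≤ s ∧ A ≤ η * g ↔ s⁻¹ * g ≤ 1 ∧ s⁻¹ * A ≤ η * (s⁻¹ * g)) := by
    intro g A hg hA
    constructor
    · rintro ⟨h1, h2⟩
      constructor
      · calc s⁻¹ * g ≤ s⁻¹ * s := mul_le_mul_of_nonneg_left h1 (inv_nonneg.2 hs.le)
          _ = 1 := inv_mul_cancel₀ hs.ne'
      · calc s⁻¹ * A ≤ s⁻¹ * (η * g) := mul_le_mul_of_nonneg_left h2 (inv_nonneg.2 hs.le)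
          _ = η * (s⁻¹ * g) := by ring
    · rintro ⟨h1, h2⟩
      constructor
      · have := mul_le_mul_of_nonneg_left h1 hs.le
        rwa [← mul_assoc, mul_inv_cancel₀ hs.ne', one_mul, mul_one] at this
      · have := mul_le_mul_of_nonneg_left h2 hs.le
        calc A = s * (s⁻¹ * A) := by rw [← mul_assoc, mul_inv_cancel₀ hs.ne', one_mul]
          _ ≤ s * (η * (s⁻¹ * g)) := this
          _ = η * g := by rw [← mul_assoc, mul_comm s η, mul_assoc, ← mul_assoc s,
              mul_inv_cancel₀ hs.ne', one_mul]
  exact key _ _ (gauge_nonneg _) (norm_nonneg _)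

lemma coneSet_closed (hKconv : Convex ℝ K) (hK0 : K ∈ nhds 0) (s : ℝ) :
    IsClosed (coneSet K p η s) := by
  have hg : Continuous (gauge K) := continuous_gauge hKconv hK0
  exact (isClosed_le hg continuous_const).inter
    (isClosed_le (continuous_id.sub (hg.smul continuous_const)).norm (continuous_const.mul hg))

lemma coneSet_subset_smul (hKcl : IsClosed K) (hKconv : Convex ℝ K) (hK0 : K ∈ nhds 0)
    {s : ℝ} (hs : 0 < s) : coneSet K p η s ⊆ s • K :=
  fun _ hx => (mem_smul_iff_gauge_le hKcl hKconv hK0 hs).2 hx.1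

lemma coneSet_gauge_bound {L : Set E} (hLconv : Convex ℝ L) (hL0 : L ∈ nhds 0)
    {ρL : ℝ} (hρL : 0 < ρL) (hballL : Metric.closedBall (0:E) ρL ⊆ L) (hη : 0 ≤ η)
    {s : ℝ} (hs : 0 ≤ s) {x : E} (hx : x ∈ coneSet K p η s) :
    gauge L x ≤ (gauge L p + η / ρL) * s := by
  obtain ⟨h1, h2⟩ := hx
  have hg0 : 0 ≤ gauge K x := gauge_nonneg _
  have step : gauge L x ≤ gauge L (gauge K x • p) + ‖x - gauge K x • p‖ / ρL :=
    gauge_lip hLconv hL0 hρL hballL _ _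
  have hsm : gauge L (gauge K x • p) = gauge K x * gauge L p := by
    rw [gauge_smul_of_nonneg hg0, smul_eq_mul]
  have h2' : ‖x - gauge K x • p‖ / ρL ≤ gauge K x * (η / ρL) := by
    rw [div_le_iff₀ hρL]
    calc ‖x - gauge K x • p‖ ≤ η * gauge K x := h2
      _ = gauge K x * (η / ρL) * ρL := by field_simp
  have hLp : 0 ≤ gauge L p := gauge_nonneg _
  calc gauge L x ≤ gauge L (gauge K x • p) + ‖x - gauge K x • p‖ / ρL := step
    _ = gauge K x * gauge L p + ‖x - gauge K x • p‖ / ρL := by rw [hsm]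
    _ ≤ gauge K x * gauge L p + gauge K x * (η / ρL) := add_le_add le_rfl h2'
    _ = gauge K x * (gauge L p + η / ρL) := by ring
    _ ≤ s * (gauge L p + η / ρL) :=
        mul_le_mul_of_nonneg_right h1 (add_nonneg hLp (by positivity))
    _ = (gauge L p + η / ρL) * s := mul_comm _ _

end coneSet
open MeasureTheory Filter Set Pointwise

lemma coneSet_vol_pos {n : ℕ} {K : Set (EuclideanSpace ℝ (Fin n))} {p : EuclideanSpace ℝ (Fin n)}
    {η : ℝ} (hη : 0 < η) (hKconv : Convex ℝ K) (hK0 : K ∈ nhds 0)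
    {ρK : ℝ} (hρK : 0 < ρK) (hballK : Metric.closedBall 0 ρK ⊆ K)
    (hp : gauge K p = 1) :
    0 < volume (coneSet K p η 1) := by
  set δ := min (ρK / 4) (η / (4 * (1 + ‖p‖ / ρK))) with hδ_def
  have hpnorm : (0:ℝ) < 1 + ‖p‖ / ρK := by positivity
  have hδ : 0 < δ := lt_min (by positivity) (by positivity)
  have hδ1 : δ ≤ ρK / 4 := min_le_left _ _
  have hδ2 : δ ≤ η / (4 * (1 + ‖p‖ / ρK)) := min_le_right _ _
  have hδρ : δ / ρK ≤ 1 / 4 := by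
    rw [div_le_div_iff₀ hρK (by norm_num)]
    linarith
  have hsub : Metric.closedBall ((2⁻¹:ℝ) • p) δ ⊆ coneSet K p η 1 := by
    intro x hx
    have hd : ‖x - (2⁻¹:ℝ) • p‖ ≤ δ := by
      rwa [Metric.mem_closedBall, dist_eq_norm] at hx
    have hg2 : gauge K ((2⁻¹:ℝ) • p) = 2⁻¹ := by
      rw [gauge_smul_of_nonneg (by norm_num : (0:ℝ) ≤ 2⁻¹), hp, smul_eq_mul, mul_one]
    have hup : gauge K x ≤ 2⁻¹ + δ / ρK := by
      calc gauge K x ≤ gauge K ((2⁻¹:ℝ) • p) + ‖x - (2⁻¹:ℝ) • p‖ / ρK :=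
            gauge_lip hKconv hK0 hρK hballK _ _
        _ ≤ 2⁻¹ + δ / ρK := by rw [hg2]; gcongr
    have hlo : 2⁻¹ - δ / ρK ≤ gauge K x := by
      have := gauge_lip hKconv hK0 hρK hballK ((2⁻¹:ℝ) • p) x
      rw [hg2, norm_sub_rev] at this
      have h' : ‖x - (2⁻¹:ℝ) • p‖ / ρK ≤ δ / ρK := by gcongr
      linarith
    have hq : (1:ℝ)/4 ≤ gauge K x := by
      have : 2⁻¹ - δ / ρK ≥ 1/4 := by linarith
      linarith
    refine ⟨by linarith, ?_⟩
    have hsplit : ‖x - gauge K x • p‖ ≤ δ + (δ / ρK) * ‖p‖ := by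
      calc ‖x - gauge K x • p‖ = ‖(x - (2⁻¹:ℝ) • p) + ((2⁻¹ - gauge K x) • p)‖ := by
            rw [sub_smul]; congr 1; abel
        _ ≤ ‖x - (2⁻¹:ℝ) • p‖ + ‖(2⁻¹ - gauge K x) • p‖ := norm_add_le _ _
        _ ≤ δ + |2⁻¹ - gauge K x| * ‖p‖ := by
            rw [norm_smul, Real.norm_eq_abs]; gcongr
        _ ≤ δ + (δ / ρK) * ‖p‖ := by
            have : |2⁻¹ - gauge K x| ≤ δ / ρK := abs_le.2 ⟨by linarith, by linarith⟩
            gcongr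
    have hfinal : δ + (δ / ρK) * ‖p‖ ≤ η / 4 := by
      have h1 : δ + (δ / ρK) * ‖p‖ = δ * (1 + ‖p‖ / ρK) := by field_simp
      rw [h1]
      calc δ * (1 + ‖p‖ / ρK) ≤ (η / (4 * (1 + ‖p‖ / ρK))) * (1 + ‖p‖ / ρK) := by gcongr
        _ = η / 4 := by field_simp
    calc ‖x - gauge K x • p‖ ≤ η / 4 := hsplit.trans hfinal
      _ ≤ η * gauge K x := by nlinarith
  calc (0:ENNReal) < volume (Metric.closedBall ((2⁻¹:ℝ) • p) δ) := by
        refine lt_of_lt_of_le ?_ (measure_mono Metric.ball_subset_closedBall)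
        exact Metric.measure_ball_pos _ _ hδ
    _ ≤ volume (coneSet K p η 1) := measure_mono hsub
open MeasureTheory Filter Set Pointwise

lemma mixed_lower {n : ℕ} (hn : 1 ≤ n) (μ : Measure (EuclideanSpace ℝ (Fin n)))
    (dens : EuclideanSpace ℝ (Fin n) → ENNReal) (hμd : μ = volume.withDensity dens)
    (hdmeas : Measurable dens) (hdens1 : ∀ x, dens x ≤ 1)
    {K : Set (EuclideanSpace ℝ (Fin n))} (hKcomp : IsCompact K) (hKconv : Convex ℝ K)
    (hK0 : K ∈ nhds 0)
    {p : EuclideanSpace ℝ (Fin n)} {η : ℝ}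
    {R : ℝ} (hR : 0 < R) (hKR : ∀ x ∈ K, ‖x‖ ≤ R)
    {t ε : ℝ} (ht : 0 < t) (hε : 0 < ε)
    {d₀ : ENNReal} (hd₀top : d₀ ≠ ⊤)
    (hd₀ : ∀ x ∈ coneSet K p η ((1 + ε / (t * R)) * t), d₀ ≤ dens x) :
    d₀.toReal * ((ε / R) * t ^ (n - 1) * (volume (coneSet K p η 1)).toReal)
      ≤ (μ (t • K + ε • Metric.closedBall 0 1)).toReal - (μ (t • K)).toReal := by
  have hKcl : IsClosed K := hKcomp.isClosed
  set u := ε / (t * R) with hu_def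
  have hu : 0 < u := by positivity
  set s₁ := (1 + u) * t with hs₁_def
  have hs₁ : 0 < s₁ := by positivity
  have hts₁ : t ≤ s₁ := by nlinarith
  set C1 := coneSet K p η 1 with hC1_def
  set S := coneSet K p η s₁ \ coneSet K p η t with hS_def
  -- measurability
  have hmeas_cone : ∀ s : ℝ, MeasurableSet (coneSet K p η s) :=
    fun s => (coneSet_closed hKconv hK0 s).measurableSet
  have hmeas_S : MeasurableSet S := (hmeas_cone s₁).diff (hmeas_cone t)
  have hcomp_tK : IsCompact (t • K) := hKcomp.smul t
  have hmeas_tK : MeasurableSet (t • K) := hcomp_tK.isClosed.measurableSet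
  -- disjointness from t•K
  have hdisj : Disjoint S (t • K) := by
    rw [disjoint_left]
    rintro x ⟨hx1, hx2⟩ hxK
    exact hx2 ⟨(mem_smul_iff_gauge_le hKcl hKconv hK0 ht).1 hxK, hx1.2⟩
  -- S sits inside the Minkowski sum
  have hball_eq : ε • Metric.closedBall (0 : EuclideanSpace ℝ (Fin n)) 1
      = Metric.closedBall 0 ε := by
    rw [smul_closedBall _ _ zero_le_one, smul_zero, Real.norm_of_nonneg hε.le, mul_one]
  have hsubS : S ⊆ t • K + ε • Metric.closedBall 0 1 := by
    intro x hx
    have hx1 : x ∈ coneSet K p η s₁ := hx.1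
    rw [coneSet_smul hs₁] at hx1
    obtain ⟨w, hw, rfl⟩ := hx1
    have hwK : w ∈ K := by
      have := coneSet_subset_smul hKcl hKconv hK0 one_pos hw
      rwa [one_smul] at this
    have hy : t • w ∈ t • K := smul_mem_smul_set hwK
    have hz : (u * t) • w ∈ ε • Metric.closedBall 0 1 := by
      rw [hball_eq, Metric.mem_closedBall, dist_zero_right, norm_smul, Real.norm_of_nonneg
        (by positivity : (0:ℝ) ≤ u * t)]
      calc u * t * ‖w‖ ≤ u * t * R := by
            have := hKR w hwK; gcongr
        _ = ε := by rw [hu_def]; field_simp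
    refine ⟨t • w, hy, (u * t) • w, hz, ?_⟩
    show t • w + (u * t) • w = s₁ • w
    rw [← add_smul]
    congr 1
    rw [hs₁_def]; ring
  -- measure lower bound on S via density
  have hμS_lb : d₀ * volume S ≤ μ S := by
    rw [hμd, withDensity_apply _ hmeas_S]
    calc d₀ * volume S = ∫⁻ _ in S, d₀ ∂volume := (setLIntegral_const _ _).symm
      _ ≤ ∫⁻ x in S, dens x ∂volume :=
          setLIntegral_mono hdmeas (fun x hx => hd₀ x hx.1)
  -- volumes of cone sets
  have hvol_cone : ∀ {s : ℝ}, 0 < s →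
      volume (coneSet K p η s) = ENNReal.ofReal (s ^ n) * volume C1 := by
    intro s hs
    rw [coneSet_smul hs, Measure.addHaar_smul_of_nonneg _ hs.le, finrank_euclideanSpace_fin]
  have hvolC_fin : volume C1 ≠ ⊤ := by
    refine ne_top_of_le_ne_top hKcomp.measure_lt_top.ne (measure_mono ?_)
    intro x hx
    have := coneSet_subset_smul hKcl hKconv hK0 one_pos hx
    rwa [one_smul] at this
  have hvol_t_fin : volume (coneSet K p η t) ≠ ⊤ := by
    rw [hvol_cone ht]; exact ENNReal.mul_ne_top ENNReal.ofReal_ne_top hvolC_fin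
  have hvol_s₁_fin : volume (coneSet K p η s₁) ≠ ⊤ := by
    rw [hvol_cone hs₁]; exact ENNReal.mul_ne_top ENNReal.ofReal_ne_top hvolC_fin
  have hvolS : volume S = volume (coneSet K p η s₁) - volume (coneSet K p η t) := by
    rw [hS_def, measure_diff (coneSet_mono hts₁) (hmeas_cone t).nullMeasurableSet hvol_t_fin]
  have hvolS_fin : volume S ≠ ⊤ :=
    ne_top_of_le_ne_top hvol_s₁_fin (measure_mono diff_subset)
  have hpowmono : t ^ n ≤ s₁ ^ n := pow_le_pow_left₀ ht.le hts₁ n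
  have hvolS_toReal : (volume S).toReal = (s₁ ^ n - t ^ n) * (volume C1).toReal := by
    rw [hvolS, ENNReal.toReal_sub_of_le
      (by rw [hvol_cone ht, hvol_cone hs₁];
          exact mul_le_mul_left (ENNReal.ofReal_le_ofReal hpowmono) _) hvol_s₁_fin,
      hvol_cone ht, hvol_cone hs₁, ENNReal.toReal_mul, ENNReal.toReal_mul,
      ENNReal.toReal_ofReal (by positivity), ENNReal.toReal_ofReal (by positivity)]
    ring
  have hkey : (ε / R) * t ^ (n - 1) * (volume C1).toReal ≤ (volume S).toReal := by
    rw [hvolS_toReal]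
    have h1u : (1 + u) ≤ (1 + u) ^ n := le_self_pow₀ (by linarith) (by omega)
    have hs₁n : (1 + u) * t ^ n ≤ s₁ ^ n := by
      rw [hs₁_def, mul_pow]
      exact mul_le_mul_of_nonneg_right h1u (by positivity)
    have hut : u * t ^ n = (ε / R) * t ^ (n - 1) := by
      have hpow : t ^ n = t ^ (n - 1) * t := by
        rw [← pow_succ]; congr 1; omega
      rw [hpow, hu_def]; field_simp
    have : u * t ^ n ≤ s₁ ^ n - t ^ n := by nlinarith
    rw [← hut]
    exact mul_le_mul_of_nonneg_right this ENNReal.toReal_nonneg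
  -- finiteness of μ on the relevant sets
  have hμ_le_vol : ∀ s : Set (EuclideanSpace ℝ (Fin n)), MeasurableSet s → μ s ≤ volume s := by
    intro s hs
    rw [hμd, withDensity_apply _ hs]
    calc ∫⁻ x in s, dens x ∂volume ≤ ∫⁻ _ in s, 1 ∂volume :=
          setLIntegral_mono measurable_const (fun x _ => hdens1 x)
      _ = volume s := by rw [setLIntegral_const, one_mul]
  have hcomp_big : IsCompact (t • K + ε • Metric.closedBall 0 1) :=
    hcomp_tK.add ((isCompact_closedBall _ _).smul ε)
  have hμbig_fin : μ (t • K + ε • Metric.closedBall 0 1) ≠ ⊤ :=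
    ne_top_of_le_ne_top hcomp_big.measure_lt_top.ne
      (hμ_le_vol _ hcomp_big.isClosed.measurableSet)
  have htK_sub : t • K ⊆ t • K + ε • Metric.closedBall 0 1 :=
    subset_add_left _ ⟨0, Metric.mem_closedBall_self zero_le_one, smul_zero ε⟩
  have hμtK_fin : μ (t • K) ≠ ⊤ := ne_top_of_le_ne_top hμbig_fin (measure_mono htK_sub)
  have hμS_fin : μ S ≠ ⊤ :=
    ne_top_of_le_ne_top hμbig_fin (measure_mono hsubS)
  -- combine
  have hsum : μ S + μ (t • K) ≤ μ (t • K + ε • Metric.closedBall 0 1) := by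
    rw [← measure_union hdisj hmeas_tK]
    exact measure_mono (union_subset hsubS htK_sub)
  have hsum' : (μ S).toReal + (μ (t • K)).toReal
      ≤ (μ (t • K + ε • Metric.closedBall 0 1)).toReal := by
    rw [← ENNReal.toReal_add hμS_fin hμtK_fin]
    exact ENNReal.toReal_mono hμbig_fin hsum
  have hfinal : d₀.toReal * ((ε / R) * t ^ (n - 1) * (volume C1).toReal) ≤ (μ S).toReal := by
    calc d₀.toReal * ((ε / R) * t ^ (n - 1) * (volume C1).toReal)
        ≤ d₀.toReal * (volume S).toReal :=
          mul_le_mul_of_nonneg_left hkey ENNReal.toReal_nonneg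
      _ = (d₀ * volume S).toReal := (ENNReal.toReal_mul).symm
      _ ≤ (μ S).toReal := ENNReal.toReal_mono hμS_fin hμS_lb
  linarith
open MeasureTheory Filter Set Pointwise

lemma liminf_ge_of_bounds {f : ℝ → ℝ} {c Cu : ℝ}
    (hub : ∀ᶠ ε in nhdsWithin 0 (Set.Ioi 0), f ε ≤ Cu)
    (hlb : ∀ᶠ ε in nhdsWithin 0 (Set.Ioi 0), c ≤ f ε) :
    c ≤ Filter.liminf f (nhdsWithin 0 (Set.Ioi 0)) := by
  rw [Filter.liminf_eq]
  refine le_csSup ⟨Cu, ?_⟩ hlb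
  rintro a ha
  obtain ⟨ε, h1, h2⟩ := ((Filter.eventually_iff.2 ha).and hub).exists
  linarith

lemma liminf_le_of_bounds {f : ℝ → ℝ} {Cu : ℝ}
    (h0 : ∀ᶠ ε in nhdsWithin 0 (Set.Ioi 0), 0 ≤ f ε)
    (hub : ∀ᶠ ε in nhdsWithin 0 (Set.Ioi 0), f ε ≤ Cu) :
    Filter.liminf f (nhdsWithin 0 (Set.Ioi 0)) ≤ Cu := by
  rw [Filter.liminf_eq]
  refine csSup_le ⟨0, h0⟩ ?_
  rintro a ha
  obtain ⟨ε, h1, h2⟩ := ((Filter.eventually_iff.2 ha).and hub).exists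
  linarith
open MeasureTheory Filter Set Pointwise

/-- The mixed measure `μ(K; M) = liminf_{ε→0⁺} (μ(K + εM) − μ(K))/ε`. -/
noncomputable def mixedMeasure {n : ℕ}
    (μ : Measure (EuclideanSpace ℝ (Fin n)))
    (K M : Set (EuclideanSpace ℝ (Fin n))) : ℝ :=
  Filter.liminf
    (fun ε : ℝ => ((μ (K + ε • M)).toReal - (μ K).toReal) / ε)
    (nhdsWithin 0 (Set.Ioi 0))

set_option maxHeartbeats 1000000 in
theorem stmt_11 {n : ℕ} (hn : 1 ≤ n)
    (K L : Set (EuclideanSpace ℝ (Fin n)))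
    (hKcomp : IsCompact K) (hKconv : Convex ℝ K)
    (hK0 : (0 : EuclideanSpace ℝ (Fin n)) ∈ interior K)
    (hLcomp : IsCompact L) (hLconv : Convex ℝ L)
    (hL0 : (0 : EuclideanSpace ℝ (Fin n)) ∈ interior L)
    (φ : ℝ → ℝ)
    (hφmono : MonotoneOn φ (Ici 0))
    (hφconv : ConvexOn ℝ (Ici 0) φ)
    (hφnonneg : ∀ x ∈ Ici (0:ℝ), 0 ≤ φ x)
    (hφnonconst : ∃ a ∈ Ici (0:ℝ), ∃ b ∈ Ici (0:ℝ), φ a ≠ φ b)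
    (μ : Measure (EuclideanSpace ℝ (Fin n)))
    (hμ : μ = MeasureTheory.volume.withDensity
      (fun x => ENNReal.ofReal (Real.exp (-φ (gauge L x)))))
    (t₀ : ℝ) (ht₀ : 0 < t₀)
    (hdom : ∀ t : ℝ, t₀ ≤ t →
      mixedMeasure μ (t • K) (Metric.closedBall 0 1)
        ≤ mixedMeasure μ (t • L) (Metric.closedBall 0 1)) :
    L ⊆ K := by
  by_contra hnsub
  rw [Set.not_subset] at hnsub
  obtain ⟨x₀, hx₀L, hx₀K⟩ := hnsub
  have hKnh : K ∈ nhds 0 := mem_interior_iff_mem_nhds.1 hK0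
  have hLnh : L ∈ nhds 0 := mem_interior_iff_mem_nhds.1 hL0
  have hKcl := hKcomp.isClosed
  have hLcl := hLcomp.isClosed
  have h0L : (0 : EuclideanSpace ℝ (Fin n)) ∈ L := interior_subset hL0
  obtain ⟨ρK, hρK, hballK⟩ : ∃ ρ : ℝ, 0 < ρ ∧ Metric.closedBall 0 ρ ⊆ K := by
    obtain ⟨rK, hrK, hballK'⟩ := Metric.mem_nhds_iff.1 hKnh
    exact ⟨rK / 2, by positivity,
      (Metric.closedBall_subset_ball (by linarith)).trans hballK'⟩
  obtain ⟨ρL, hρL, hballL⟩ : ∃ ρ : ℝ, 0 < ρ ∧ Metric.closedBall 0 ρ ⊆ L := by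
    obtain ⟨rL, hrL, hballL'⟩ := Metric.mem_nhds_iff.1 hLnh
    exact ⟨rL / 2, by positivity,
      (Metric.closedBall_subset_ball (by linarith)).trans hballL'⟩
  obtain ⟨R, hR, hKR⟩ : ∃ R : ℝ, 0 < R ∧ ∀ x ∈ K, ‖x‖ ≤ R := by
    obtain ⟨R₀, hR₀⟩ := hKcomp.isBounded.exists_norm_le
    exact ⟨max R₀ 1, lt_of_lt_of_le one_pos (le_max_right _ _),
      fun x hx => (hR₀ x hx).trans (le_max_left _ _)⟩
  -- the witness point on the boundary of K with small L-gauge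
  have hg₀ : 1 < gauge K x₀ := by
    by_contra h
    push_neg at h
    have hx : x₀ ∈ closure K := (gauge_le_one_iff_mem_closure hKconv hKnh).1 h
    rw [hKcl.closure_eq] at hx
    exact hx₀K hx
  have hg₀0 : 0 < gauge K x₀ := lt_trans one_pos hg₀
  obtain ⟨p, hp, hcp⟩ : ∃ p : EuclideanSpace ℝ (Fin n), gauge K p = 1 ∧ gauge L p < 1 := by
    refine ⟨(gauge K x₀)⁻¹ • x₀, ?_, ?_⟩
    · rw [gauge_smul_of_nonneg (inv_nonneg.2 hg₀0.le), smul_eq_mul,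
        inv_mul_cancel₀ hg₀0.ne']
    · rw [gauge_smul_of_nonneg (inv_nonneg.2 hg₀0.le), smul_eq_mul]
      have h1 : gauge L x₀ ≤ 1 := gauge_le_one_of_mem hx₀L
      have h3 : (gauge K x₀)⁻¹ < 1 := by rw [inv_lt_one_iff₀]; right; exact hg₀
      calc (gauge K x₀)⁻¹ * gauge L x₀ ≤ (gauge K x₀)⁻¹ * 1 :=
            mul_le_mul_of_nonneg_left h1 (inv_nonneg.2 hg₀0.le)
        _ = (gauge K x₀)⁻¹ := mul_one _
        _ < 1 := h3
  have hcp0 : 0 ≤ gauge L p := gauge_nonneg _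
  obtain ⟨η, c₂, c₃, hη, hc₂0, hc₃0, hc₃1, hc₂eq, hc₂₃⟩ :
      ∃ η c₂ c₃ : ℝ, 0 < η ∧ 0 < c₂ ∧ 0 < c₃ ∧ c₃ < 1 ∧
        gauge L p + η / ρL = c₂ ∧ c₂ < c₃ := by
    refine ⟨ρL * (1 - gauge L p) / 2, (1 + gauge L p) / 2,
      (1 + (1 + gauge L p) / 2) / 2, by nlinarith, by linarith, by linarith, by linarith,
      ?_, by linarith⟩
    field_simp
    ring
  obtain ⟨u₀, hu₀, hu₀le⟩ : ∃ u₀ : ℝ, 0 < u₀ ∧ c₂ * (1 + u₀) ≤ c₃ := by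
    refine ⟨c₃ / c₂ - 1, ?_, ?_⟩
    · rw [sub_pos, lt_div_iff₀ hc₂0, one_mul]; exact hc₂₃
    · rw [show 1 + (c₃ / c₂ - 1) = c₃ / c₂ by ring, mul_div_cancel₀ _ hc₂0.ne']
  -- density facts
  set dens := fun x : EuclideanSpace ℝ (Fin n) =>
    ENNReal.ofReal (Real.exp (-φ (gauge L x))) with hdens_def
  have hμd : μ = volume.withDensity dens := hμ
  have hdmeas : Measurable dens := by
    have hψ : Monotone (fun y : ℝ => φ (max 0 y)) := fun a b hab =>
      hφmono (mem_Ici.2 (le_max_left _ _)) (mem_Ici.2 (le_max_left _ _))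
        (max_le_max le_rfl hab)
    have heq : dens = fun x =>
        ENNReal.ofReal (Real.exp (-(fun y : ℝ => φ (max 0 y)) (gauge L x))) := by
      funext x
      simp only [hdens_def, max_eq_right (gauge_nonneg _)]
    rw [heq]
    exact ENNReal.measurable_ofReal.comp (Real.measurable_exp.comp
      ((hψ.measurable.comp (continuous_gauge hLconv hLnh).measurable).neg))
  have hdens1 : ∀ x, dens x ≤ 1 := by
    intro x
    rw [hdens_def]
    simp only
    rw [show (1:ENNReal) = ENNReal.ofReal 1 by simp]
    apply ENNReal.ofReal_le_ofReal
    rw [Real.exp_le_one_iff, neg_nonpos]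
    exact hφnonneg _ (mem_Ici.2 (gauge_nonneg _))
  set B1 := Metric.closedBall (0 : EuclideanSpace ℝ (Fin n)) 1 with hB1_def
  -- measure finiteness on compacts
  have hμ_le_vol : ∀ s : Set (EuclideanSpace ℝ (Fin n)),
      MeasurableSet s → μ s ≤ volume s := by
    intro s hs
    rw [hμd, withDensity_apply _ hs]
    calc ∫⁻ x in s, dens x ∂volume ≤ ∫⁻ _ in s, 1 ∂volume :=
          setLIntegral_mono measurable_const (fun x _ => hdens1 x)
      _ = volume s := by rw [setLIntegral_const, one_mul]
  have hμcomp : ∀ s : Set (EuclideanSpace ℝ (Fin n)), IsCompact s → μ s ≠ ⊤ := fun s hs =>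
    ne_top_of_le_ne_top hs.measure_lt_top.ne (hμ_le_vol s hs.isClosed.measurableSet)
  -- cone volume
  obtain ⟨vC, hvC', hvC_def⟩ : ∃ vC : ℝ, 0 < vC ∧ (volume (coneSet K p η 1)).toReal = vC := by
    refine ⟨(volume (coneSet K p η 1)).toReal, ?_, rfl⟩
    have hvC0 : 0 < volume (coneSet K p η 1) :=
      coneSet_vol_pos hη hKconv hKnh hρK hballK hp
    have hvCfin : volume (coneSet K p η 1) ≠ ⊤ := by
      refine ne_top_of_le_ne_top hKcomp.measure_lt_top.ne (measure_mono ?_)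
      intro x hx
      have := coneSet_subset_smul hKcl hKconv hKnh one_pos hx
      rwa [one_smul] at this
    exact ENNReal.toReal_pos hvC0.ne' hvCfin
  obtain ⟨volL', hvolL0, hvolL_def⟩ : ∃ v : ℝ, 0 ≤ v ∧ (volume L).toReal = v :=
    ⟨(volume L).toReal, ENNReal.toReal_nonneg, rfl⟩
  obtain ⟨volK', hvolK0, hvolK_def⟩ : ∃ v : ℝ, 0 ≤ v ∧ (volume K).toReal = v :=
    ⟨(volume K).toReal, ENNReal.toReal_nonneg, rfl⟩
  -- generic upper bound on the difference quotient
  have hupper : ∀ M : Set (EuclideanSpace ℝ (Fin n)), IsCompact M → Convex ℝ M →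
      M ∈ nhds 0 → ∀ ρ : ℝ, 0 < ρ → Metric.closedBall 0 ρ ⊆ M → ∀ t : ℝ, 0 < t →
      ∀ d : ENNReal, d ≠ ⊤ → (∀ x, x ∉ t • M → dens x ≤ d) → ∀ ε : ℝ, 0 < ε → ε ≤ 1 →
      ((μ (t • M + ε • B1)).toReal - (μ (t • M)).toReal) / ε
        ≤ d.toReal * (n * (t + 1/ρ) ^ (n-1) * (volume M).toReal / ρ) := by
    intro M hMc hMconv hM0 ρ hρ hball t ht d hd hdb ε hε hε1
    have h1 := shell_upper μ dens hμd hMc hMconv hM0 hρ hball ht hε hd hdb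
    have h2 : (t + ε/ρ) ^ n - t ^ n ≤ (ε/ρ) * n * (t + 1/ρ) ^ (n-1) := by
      have hb := pow_shell_le hn (t := t) (a := ε/ρ) ht (by positivity)
      have h3 : (t + ε/ρ) ^ (n-1) ≤ (t + 1/ρ) ^ (n-1) := by
        apply pow_le_pow_left₀ (by positivity)
        have : ε / ρ ≤ 1 / ρ := by gcongr
        linarith
      calc (t + ε/ρ) ^ n - t ^ n ≤ (ε/ρ) * n * (t + ε/ρ) ^ (n-1) := hb
        _ ≤ (ε/ρ) * n * (t + 1/ρ) ^ (n-1) := by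
            apply mul_le_mul_of_nonneg_left h3 (by positivity)
    rw [div_le_iff₀ hε]
    calc (μ (t • M + ε • B1)).toReal - (μ (t • M)).toReal
        ≤ d.toReal * (((t + ε/ρ) ^ n - t ^ n) * (volume M).toReal) := h1
      _ ≤ d.toReal * (((ε/ρ) * n * (t + 1/ρ) ^ (n-1)) * (volume M).toReal) :=
          mul_le_mul_of_nonneg_left
            (mul_le_mul_of_nonneg_right h2 ENNReal.toReal_nonneg) ENNReal.toReal_nonneg
      _ = d.toReal * (n * (t + 1/ρ) ^ (n-1) * (volume M).toReal / ρ) * ε := by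
          field_simp
  -- lower bound on the mixed measure of t•K
  have hlower : ∀ t : ℝ, 1 ≤ t →
      Real.exp (-φ (c₃ * t)) * ((1/R) * t ^ (n-1) * vC)
        ≤ mixedMeasure μ (t • K) B1 := by
    intro t ht1
    have ht0 : 0 < t := lt_of_lt_of_le one_pos ht1
    show _ ≤ Filter.liminf _ _
    apply liminf_ge_of_bounds
      (Cu := (1:ENNReal).toReal * (n * (t + 1/ρK) ^ (n-1) * (volume K).toReal / ρK))
    · filter_upwards [Ioc_mem_nhdsGT_of_mem (Set.mem_Ico.2 ⟨le_refl (0:ℝ), one_pos⟩)]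
      intro ε hε
      exact hupper K hKcomp hKconv hKnh ρK hρK hballK t ht0 1 ENNReal.one_ne_top
        (fun x _ => hdens1 x) ε hε.1 hε.2
    · filter_upwards [Ioc_mem_nhdsGT_of_mem
        (Set.mem_Ico.2 ⟨le_refl (0:ℝ), (mul_pos (mul_pos ht0 hR) hu₀ : (0:ℝ) < t * R * u₀)⟩)]
      intro ε hε
      obtain ⟨hε0, hεle⟩ := hε
      have hd₀ : ∀ x ∈ coneSet K p η ((1 + ε / (t * R)) * t),
          ENNReal.ofReal (Real.exp (-φ (c₃ * t))) ≤ dens x := by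
        intro x hx
        have htR : (0:ℝ) < t * R := mul_pos ht0 hR
        have hu1 : ε / (t * R) ≤ u₀ := by
          rw [div_le_iff₀ htR]
          calc ε ≤ t * R * u₀ := hεle
            _ = u₀ * (t * R) := by ring
        have hu2 : (0:ℝ) < ε / (t * R) := div_pos hε0 htR
        have hs0 : (0:ℝ) ≤ (1 + ε / (t * R)) * t := by nlinarith
        have hg := coneSet_gauge_bound hLconv hLnh hρL hballL hη.le hs0 hx
        rw [hc₂eq] at hg
        have hgle : gauge L x ≤ c₃ * t := by
          have h5a : c₂ * (1 + ε / (t * R)) ≤ c₂ * (1 + u₀) :=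
            mul_le_mul_of_nonneg_left (by linarith) hc₂0.le
          have h5b : c₂ * (1 + ε / (t * R)) ≤ c₃ := le_trans h5a hu₀le
          have h5c : c₂ * (1 + ε / (t * R)) * t ≤ c₃ * t :=
            mul_le_mul_of_nonneg_right h5b ht0.le
          have h5 : c₂ * ((1 + ε / (t * R)) * t) ≤ c₃ * t := by
            rw [← mul_assoc]; exact h5c
          linarith [hg]
        have hφle : φ (gauge L x) ≤ φ (c₃ * t) :=
          hφmono (mem_Ici.2 (gauge_nonneg _)) (mem_Ici.2 (by positivity)) hgle
        rw [hdens_def]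
        exact ENNReal.ofReal_le_ofReal (Real.exp_le_exp.2 (by linarith))
      have hml := mixed_lower hn μ dens hμd hdmeas hdens1 hKcomp hKconv hKnh hR hKR
        ht0 hε0 (d₀ := ENNReal.ofReal (Real.exp (-φ (c₃ * t)))) ENNReal.ofReal_ne_top hd₀
      rw [ENNReal.toReal_ofReal (Real.exp_nonneg _), hvC_def] at hml
      rw [le_div_iff₀ hε0]
      calc Real.exp (-φ (c₃ * t)) * ((1/R) * t ^ (n-1) * vC) * ε
          = Real.exp (-φ (c₃ * t)) * ((ε/R) * t ^ (n-1) * vC) := by ring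
        _ ≤ _ := hml
  -- upper bound on the mixed measure of t•L
  have hupperL : ∀ t : ℝ, 1 ≤ t →
      mixedMeasure μ (t • L) B1
        ≤ Real.exp (-φ t) * (n * (t + 1/ρL) ^ (n-1) * volL' / ρL) := by
    intro t ht1
    have ht0 : 0 < t := lt_of_lt_of_le one_pos ht1
    show Filter.liminf _ _ ≤ _
    have hexp : (ENNReal.ofReal (Real.exp (-φ t))).toReal = Real.exp (-φ t) :=
      ENNReal.toReal_ofReal (Real.exp_nonneg _)
    apply liminf_le_of_bounds
    · filter_upwards [self_mem_nhdsWithin]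
      intro ε hε
      have hε0 : (0:ℝ) < ε := hε
      apply div_nonneg _ hε0.le
      rw [sub_nonneg]
      have hsub : t • L ⊆ t • L + ε • B1 := by
        apply subset_add_left
        exact ⟨0, Metric.mem_closedBall_self zero_le_one, smul_zero ε⟩
      have hcompL : IsCompact (t • L + ε • B1) :=
        (hLcomp.smul t).add ((isCompact_closedBall _ _).smul ε)
      exact ENNReal.toReal_mono (hμcomp _ hcompL) (measure_mono hsub)
    · filter_upwards [Ioc_mem_nhdsGT_of_mem (Set.mem_Ico.2 ⟨le_refl (0:ℝ), one_pos⟩)]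
      intro ε hε
      have hdb : ∀ x, x ∉ t • L → dens x ≤ ENNReal.ofReal (Real.exp (-φ t)) := by
        intro x hx
        have hge : t ≤ gauge L x := not_mem_smul_gauge hLconv h0L hLnh hx
        have hφge : φ t ≤ φ (gauge L x) :=
          hφmono (mem_Ici.2 ht0.le) (mem_Ici.2 (gauge_nonneg _)) hge
        rw [hdens_def]
        exact ENNReal.ofReal_le_ofReal (Real.exp_le_exp.2 (by linarith))
      have hL1 := hupper L hLcomp hLconv hLnh ρL hρL hballL t ht0
        (ENNReal.ofReal (Real.exp (-φ t))) ENNReal.ofReal_ne_top hdb ε hε.1 hε.2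
      rw [hexp, hvolL_def] at hL1
      exact hL1
  -- the per-t comparison, cleaned up
  obtain ⟨P, hP, hP_def⟩ : ∃ P : ℝ, 0 < P ∧ (1/R) * vC = P :=
    ⟨(1/R) * vC, by positivity, rfl⟩
  obtain ⟨QL, hQL0, hQL_def⟩ : ∃ Q : ℝ, 0 ≤ Q ∧ n * (1 + 1/ρL) ^ (n-1) * volL' / ρL = Q :=
    ⟨_, by positivity, rfl⟩
  have hmain : ∀ t : ℝ, 1 ≤ t → t₀ ≤ t →
      Real.exp (-φ (c₃ * t)) * P ≤ Real.exp (-φ t) * QL := by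
    intro t ht1 htt₀
    have ht0 : 0 < t := lt_of_lt_of_le one_pos ht1
    have h4 : Real.exp (-φ (c₃ * t)) * ((1/R) * t ^ (n-1) * vC)
        ≤ Real.exp (-φ t) * (n * (t + 1/ρL) ^ (n-1) * volL' / ρL) :=
      le_trans (hlower t ht1) (le_trans (hdom t htt₀) (hupperL t ht1))
    have h5 : (t + 1/ρL) ^ (n-1) ≤ (1 + 1/ρL) ^ (n-1) * t ^ (n-1) := by
      rw [← mul_pow]
      apply pow_le_pow_left₀ (by positivity)
      have h1ρ : (0:ℝ) < 1/ρL := by positivity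
      nlinarith [mul_le_mul_of_nonneg_left ht1 h1ρ.le]
    have ht' : (0:ℝ) < t ^ (n-1) := by positivity
    have h7 : Real.exp (-φ (c₃ * t)) * P * t ^ (n-1)
        ≤ Real.exp (-φ t) * QL * t ^ (n-1) := by
      calc Real.exp (-φ (c₃ * t)) * P * t ^ (n-1)
          = Real.exp (-φ (c₃ * t)) * ((1/R) * t ^ (n-1) * vC) := by
            rw [← hP_def]; ring
        _ ≤ Real.exp (-φ t) * (n * (t + 1/ρL) ^ (n-1) * volL' / ρL) := h4
        _ ≤ Real.exp (-φ t) * QL * t ^ (n-1) := by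
            rw [← hQL_def]
            have hexp0 : (0:ℝ) ≤ Real.exp (-φ t) := (Real.exp_pos _).le
            have hkey : n * (t + 1/ρL) ^ (n-1) * volL' / ρL
                ≤ n * (1 + 1/ρL) ^ (n-1) * volL' / ρL * t ^ (n-1) := by
              rw [div_mul_eq_mul_div, div_le_div_iff_of_pos_right hρL]
              calc (n:ℝ) * (t + 1/ρL) ^ (n-1) * volL'
                  ≤ n * ((1 + 1/ρL) ^ (n-1) * t ^ (n-1)) * volL' := by
                    apply mul_le_mul_of_nonneg_right _ hvolL0
                    exact mul_le_mul_of_nonneg_left h5 (by positivity)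
                _ = n * (1 + 1/ρL) ^ (n-1) * volL' * t ^ (n-1) := by ring
            calc Real.exp (-φ t) * (n * (t + 1/ρL) ^ (n-1) * volL' / ρL)
                ≤ Real.exp (-φ t) * (n * (1 + 1/ρL) ^ (n-1) * volL' / ρL * t ^ (n-1)) :=
                  mul_le_mul_of_nonneg_left hkey hexp0
              _ = Real.exp (-φ t) * (n * (1 + 1/ρL) ^ (n-1) * volL' / ρL) * t ^ (n-1) := by
                  ring
    exact le_of_mul_le_mul_right h7 ht'
  -- nonconstancy gives a positive slope
  obtain ⟨a₀, ha₀, b₀, hb₀, hab₀⟩ := hφnonconst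
  obtain ⟨a₁, b₁, ha₁, hab₁, hφab⟩ : ∃ a₁ b₁ : ℝ, 0 ≤ a₁ ∧ a₁ < b₁ ∧ φ a₁ < φ b₁ := by
    rcases lt_trichotomy a₀ b₀ with h | h | h
    · exact ⟨a₀, b₀, ha₀, h, lt_of_le_of_ne (hφmono ha₀ hb₀ h.le) hab₀⟩
    · exact absurd (congrArg φ h) hab₀
    · exact ⟨b₀, a₀, hb₀, h, lt_of_le_of_ne (hφmono hb₀ ha₀ h.le) (Ne.symm hab₀)⟩
  obtain ⟨m, hm, hm_def⟩ : ∃ m : ℝ, 0 < m ∧ (φ b₁ - φ a₁) / (b₁ - a₁) = m :=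
    ⟨_, div_pos (by linarith) (by linarith), rfl⟩
  have hslope : ∀ t : ℝ, 1 ≤ t → b₁ ≤ c₃ * t → m * ((1 - c₃) * t) ≤ φ t - φ (c₃ * t) := by
    intro t ht1 htb
    have ht0 : 0 < t := lt_of_lt_of_le one_pos ht1
    have hct : c₃ * t < t := by nlinarith
    have hc₃t0 : (0:ℝ) ≤ c₃ * t := by positivity
    have hb₁0 : (0:ℝ) ≤ b₁ := by linarith
    have s1 := hφconv.secant_mono (mem_Ici.2 ha₁) (mem_Ici.2 hb₁0)
      (mem_Ici.2 ht0.le) (by linarith : b₁ ≠ a₁) (by nlinarith : t ≠ a₁)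
      (by nlinarith : b₁ ≤ t)
    have s2 := hφconv.secant_mono (mem_Ici.2 ht0.le) (mem_Ici.2 ha₁)
      (mem_Ici.2 hc₃t0) (by nlinarith : a₁ ≠ t) (by linarith : c₃ * t ≠ t)
      (by nlinarith : a₁ ≤ c₃ * t)
    have e1 : (φ a₁ - φ t) / (a₁ - t) = (φ t - φ a₁) / (t - a₁) := by
      rw [← neg_div_neg_eq]; ring_nf
    have e2 : (φ (c₃ * t) - φ t) / (c₃ * t - t) = (φ t - φ (c₃ * t)) / (t - c₃ * t) := by
      rw [← neg_div_neg_eq]; ring_nf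
    rw [e1, e2] at s2
    rw [hm_def] at s1
    have hm2 : m ≤ (φ t - φ (c₃ * t)) / (t - c₃ * t) := le_trans s1 s2
    have hfin := (le_div_iff₀ (by nlinarith : (0:ℝ) < t - c₃ * t)).1 hm2
    calc m * ((1 - c₃) * t) = m * (t - c₃ * t) := by ring
      _ ≤ φ t - φ (c₃ * t) := hfin
  -- choose a large t and derive the contradiction
  obtain ⟨A, hA0, hA_def⟩ : ∃ A : ℝ, 0 ≤ A ∧ QL / P = A :=
    ⟨_, div_nonneg hQL0 hP.le, rfl⟩
  obtain ⟨T, hT1, hTt₀, hTb, hTA⟩ : ∃ T : ℝ, 1 ≤ T ∧ t₀ ≤ T ∧ b₁ / c₃ ≤ T ∧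
      (A + 1) / (m * (1 - c₃)) ≤ T := by
    refine ⟨max (max 1 t₀) (max (b₁ / c₃) ((A + 1) / (m * (1 - c₃)))), ?_, ?_, ?_, ?_⟩
    · exact le_trans (le_max_left 1 t₀) (le_max_left _ _)
    · exact le_trans (le_max_right 1 t₀) (le_max_left _ _)
    · exact le_trans (le_max_left _ _) (le_max_right _ _)
    · exact le_trans (le_max_right _ _) (le_max_right _ _)
  have h6 := hmain T hT1 hTt₀
  have h7 : Real.exp (φ T - φ (c₃ * T)) ≤ A := by
    rw [show φ T - φ (c₃ * T) = (-φ (c₃ * T)) - (-φ T) by ring, Real.exp_sub,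
      div_le_iff₀ (Real.exp_pos _), ← hA_def]
    calc Real.exp (-φ (c₃ * T)) ≤ Real.exp (-φ T) * QL / P := by
          rw [le_div_iff₀ hP]; exact h6
      _ = QL / P * Real.exp (-φ T) := by ring
  have hb₁T : b₁ ≤ c₃ * T := by
    have := (div_le_iff₀ hc₃0).1 hTb
    linarith
  have h8 := hslope T hT1 hb₁T
  have hmc : (0:ℝ) < m * (1 - c₃) := mul_pos hm (by linarith)
  have h9 : A + 1 ≤ m * ((1 - c₃) * T) := by
    have := (div_le_iff₀ hmc).1 hTA
    nlinarith
  have h10 : m * ((1 - c₃) * T) + 1 ≤ Real.exp (φ T - φ (c₃ * T)) := by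
    calc m * ((1 - c₃) * T) + 1 ≤ (φ T - φ (c₃ * T)) + 1 := by linarith
      _ ≤ Real.exp (φ T - φ (c₃ * T)) := Real.add_one_le_exp _
  linarith
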